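/- Let F ⊆ ℝ^q be a nonempty compact convex set with 0 ∈ int F, and Ω ⊆ ℝ^q a nonempty convex set. For x̄ ∈ Ω, the convex subdifferential of ρ_F^Ω at x̄ equals N(x̄; Ω) ∩ {v : σ_F(v) ≤ 1}, where N(x̄; Ω) is the normal cone to Ω at x̄ and σ_F is the support function of F. -/

import Mathlib

open scoped Pointwise

/-- Real-valued set-based Minkowski gauge. -/
noncomputable def rhoSR {q : ℕ} (F Ω : Set (EuclideanSpace ℝ (Fin q)))
    (x : EuclideanSpace ℝ (Fin q)) : ℝ :=
  sInf {t : ℝ | 0 ≤ t ∧ x ∈ Ω + t • F}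

/-- Convex subdifferential of a real-valued function at a point. -/
def subdiffAt {q : ℕ} (f : EuclideanSpace ℝ (Fin q) → ℝ)
    (x₀ : EuclideanSpace ℝ (Fin q)) : Set (EuclideanSpace ℝ (Fin q)) :=
  {v | ∀ x, (inner ℝ v (x - x₀) : ℝ) ≤ f x - f x₀}

/-- Normal cone to a convex set at a point. -/
def normalCone {q : ℕ} (Ω : Set (EuclideanSpace ℝ (Fin q)))
    (x₀ : EuclideanSpace ℝ (Fin q)) : Set (EuclideanSpace ℝ (Fin q)) :=
  {v | ∀ x ∈ Ω, (inner ℝ v (x - x₀) : ℝ) ≤ 0}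

/-- Support function of a set. -/
noncomputable def suppFn {q : ℕ} (F : Set (EuclideanSpace ℝ (Fin q)))
    (v : EuclideanSpace ℝ (Fin q)) : ℝ :=
  sSup ((fun f => (inner ℝ v f : ℝ)) '' F)

theorem stmt3 {q : ℕ} (F Ω : Set (EuclideanSpace ℝ (Fin q)))
    (hFne : F.Nonempty) (hFcpt : IsCompact F) (hFconv : Convex ℝ F)
    (h0 : (0 : EuclideanSpace ℝ (Fin q)) ∈ interior F)
    (hΩne : Ω.Nonempty) (hΩconv : Convex ℝ Ω)
    (x₀ : EuclideanSpace ℝ (Fin q)) (hx₀ : x₀ ∈ Ω) :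
    subdiffAt (rhoSR F Ω) x₀ = normalCone Ω x₀ ∩ {v | suppFn F v ≤ 1} := by
  -- basic facts
  have hbdd : ∀ x : EuclideanSpace ℝ (Fin q),
      BddBelow {t : ℝ | 0 ≤ t ∧ x ∈ Ω + t • F} := by
    intro x
    exact ⟨0, fun t ht => ht.1⟩
  have hρ0 : ∀ x ∈ Ω, rhoSR F Ω x = 0 := by
    intro x hx
    have h0mem : (0:ℝ) ∈ {t : ℝ | 0 ≤ t ∧ x ∈ Ω + t • F} := by
      refine ⟨le_refl 0, ?_⟩
      have hz : (0:ℝ) • F = ({0} : Set (EuclideanSpace ℝ (Fin q))) :=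
        Set.zero_smul_set hFne
      rw [hz]
      have := Set.add_mem_add hx (Set.mem_singleton (0 : EuclideanSpace ℝ (Fin q)))
      simpa using this
    exact le_antisymm (csInf_le (hbdd x) h0mem)
      (le_csInf ⟨0, h0mem⟩ fun t ht => ht.1)
  -- nonemptiness of the gauge set
  obtain ⟨ε, hε, hball⟩ := Metric.mem_nhds_iff.mp (mem_interior_iff_mem_nhds.mp h0)
  obtain ⟨ω₀, hω₀⟩ := hΩne
  have hSne : ∀ x : EuclideanSpace ℝ (Fin q),
      {t : ℝ | 0 ≤ t ∧ x ∈ Ω + t • F}.Nonempty := by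
    intro x
    set t : ℝ := (‖x - ω₀‖ + 1) / ε with ht
    have htpos : 0 < t := by positivity
    refine ⟨t, htpos.le, ?_⟩
    have hmem : x - ω₀ ∈ t • F := by
      rw [Set.mem_smul_set_iff_inv_smul_mem₀ htpos.ne']
      apply hball
      simp only [Metric.mem_ball, dist_zero_right, norm_smul, norm_inv, Real.norm_eq_abs,
        abs_of_pos htpos]
      rw [inv_mul_lt_iff₀ htpos, ht, div_mul_eq_mul_div, mul_comm]
      rw [lt_div_iff₀ hε] at *
      nlinarith [norm_nonneg (x - ω₀)]
    have := Set.add_mem_add hω₀ hmem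
    simpa using this
  ext v
  constructor
  · intro hv
    have hv' : ∀ x, (inner ℝ v (x - x₀) : ℝ) ≤ rhoSR F Ω x - rhoSR F Ω x₀ := hv
    constructor
    · intro x hx
      have := hv' x
      rw [hρ0 x hx, hρ0 x₀ hx₀] at this
      linarith
    · -- support function bound
      show suppFn F v ≤ 1
      refine csSup_le (hFne.image _) ?_
      rintro r ⟨f, hf, rfl⟩
      have hle : rhoSR F Ω (x₀ + f) ≤ 1 := by
        apply csInf_le (hbdd _)
        refine ⟨zero_le_one, ?_⟩
        have hf1 : f ∈ (1:ℝ) • F := by rw [one_smul]; exact hf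
        exact Set.add_mem_add hx₀ hf1
      have := hv' (x₀ + f)
      rw [hρ0 x₀ hx₀] at this
      simpa using this.trans (by linarith)
  · rintro ⟨hN, hσ⟩
    have hσ' : suppFn F v ≤ 1 := hσ
    intro x
    rw [hρ0 x₀ hx₀, sub_zero]
    apply le_csInf (hSne x)
    rintro t ⟨ht0, hmem⟩
    obtain ⟨ω, hω, y, hy, hxy⟩ := hmem
    obtain ⟨f, hf, rfl⟩ := hy
    have hfσ : (inner ℝ v f : ℝ) ≤ suppFn F v := by
      apply le_csSup
      · exact (hFcpt.image (innerSL ℝ v).continuous).bddAbove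
      · exact ⟨f, hf, rfl⟩
    have hωle : (inner ℝ v (ω - x₀) : ℝ) ≤ 0 := hN ω hω
    have hxeq : x - x₀ = (ω - x₀) + t • f := by
      rw [← hxy]; show ω + t • f - x₀ = (ω - x₀) + t • f; abel
    rw [hxeq, inner_add_right, real_inner_smul_right]
    nlinarith [mul_le_mul_of_nonneg_left hfσ ht0, mul_le_mul_of_nonneg_left hσ' ht0]
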